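/- Let C be a category with pullbacks, and let (L, R) be an orthogonal factorization system on C. Then L is stable under pullback if and only if the fibered reflector ρ : Arrow(C) → ΣR (sending each morphism to the R-part of its (L,R)-factorization) preserves cartesian squares, i.e. for every pullback square with right-hand vertical map g and left-hand vertical map f = b*g (pullback of g along the bottom map b), the R-factor satisfies ρ(f) ≅ b*ρ(g) over the common base. -/

import Mathlib

open CategoryTheory

universe v u

variable {C : Type u} [Category.{v} C]

/-- An orthogonal factorization system `(L, R)` on a category `C`. -/
structure IsOFS (L R : MorphismProperty C) : Prop where
  orth : ∀ ⦃A B X Y : C⦄ (f : A ⟶ B) (g : X ⟶ Y), L f → R g →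
    ∀ (u : A ⟶ X) (v : B ⟶ Y), u ≫ g = f ≫ v →
      ∃! l : B ⟶ X, f ≫ l = u ∧ l ≫ g = v
  fac : ∀ ⦃X Y : C⦄ (f : X ⟶ Y), ∃ (Z : C) (l : X ⟶ Z) (r : Z ⟶ Y),
    L l ∧ R r ∧ l ≫ r = f
  retract_left : ∀ ⦃f g : Arrow C⦄ (i : f ⟶ g) (r : g ⟶ f),
    i ≫ r = 𝟙 f → L g.hom → L f.hom
  retract_right : ∀ ⦃f g : Arrow C⦄ (i : f ⟶ g) (r : g ⟶ f),
    i ≫ r = 𝟙 f → R g.hom → R f.hom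

/-- A class of morphisms is stable under pullback. -/
def StableUnderPullback (L : MorphismProperty C) : Prop :=
  ∀ ⦃P X Y Z : C⦄ (fst : P ⟶ X) (snd : P ⟶ Y) (f : X ⟶ Z) (g : Y ⟶ Z),
    IsPullback fst snd f g → L g → L fst

/-- For an orthogonal factorization system `(L, R)` on a category with
pullbacks, given a choice of `(L, R)`-factorizations `f = lpart f ≫ rpart f`, the class
`L` is stable under pullback if and only if the fibered reflector preserves cartesian
squares: for every pullback square with right vertical `g` and left vertical the pullback
of `g` along the bottom map `b`, the `R`-factors fit into a pullback square over `b`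
compatible with the `L`-parts. -/
theorem pullbackStable_iff_reflector_cartesian [Limits.HasPullbacks C]
    (L R : MorphismProperty C) (h : IsOFS L R)
    (im : ∀ ⦃X Y : C⦄, (X ⟶ Y) → C)
    (lpart : ∀ ⦃X Y : C⦄ (f : X ⟶ Y), X ⟶ im f)
    (rpart : ∀ ⦃X Y : C⦄ (f : X ⟶ Y), im f ⟶ Y)
    (hl : ∀ ⦃X Y : C⦄ (f : X ⟶ Y), L (lpart f))
    (hr : ∀ ⦃X Y : C⦄ (f : X ⟶ Y), R (rpart f))
    (hfac : ∀ ⦃X Y : C⦄ (f : X ⟶ Y), lpart f ≫ rpart f = f) :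
    StableUnderPullback L ↔
      ∀ ⦃P X W Z : C⦄ (p₁ : P ⟶ X) (p₂ : P ⟶ W) (g : X ⟶ Z) (b : W ⟶ Z),
        IsPullback p₁ p₂ g b →
          ∃ t : im p₂ ⟶ im g,
            lpart p₂ ≫ t = p₁ ≫ lpart g ∧ IsPullback t (rpart p₂) (rpart g) b := by
  constructor
  · intro hstable P X W Z p₁ p₂ g b hpb
    -- form the pullback of `rpart g` along `b`
    obtain ⟨Q, q₁, q₂, hQ⟩ : ∃ (Q : C) (q₁ : Q ⟶ im g) (q₂ : Q ⟶ W),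
        IsPullback q₁ q₂ (rpart g) b :=
      ⟨_, _, _, IsPullback.of_hasPullback (rpart g) b⟩
    have hbig : IsPullback p₁ p₂ (lpart g ≫ rpart g) b := by rwa [hfac]
    have hcomm : (p₁ ≫ lpart g) ≫ rpart g = p₂ ≫ b := by
      rw [Category.assoc, hfac]; exact hpb.w
    let u : P ⟶ Q := hQ.lift (p₁ ≫ lpart g) p₂ hcomm
    have hu1 : u ≫ q₁ = p₁ ≫ lpart g := hQ.lift_fst _ _ _
    have hu2 : u ≫ q₂ = p₂ := hQ.lift_snd _ _ _
    -- the left square is a pullback, so `u ∈ L` by stability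
    have hbig' : IsPullback p₁ (u ≫ q₂) (lpart g ≫ rpart g) b := by rwa [hu2]
    have hleft : IsPullback p₁ u (lpart g) q₁ :=
      IsPullback.of_bot hbig' hu1.symm hQ
    have hLu : L u := hstable u p₁ q₁ (lpart g) hleft.flip (hl g)
    -- `q₂ ∈ R`, as `R` is stable under pullback
    have hRq₂ : R q₂ := by
      obtain ⟨d, ⟨hd1, hd2⟩, -⟩ := h.orth (lpart q₂) (rpart g) (hl q₂) (hr g)
        q₁ (rpart q₂ ≫ b)
        (by rw [← Category.assoc, hfac, hQ.w])
      let s : im q₂ ⟶ Q := hQ.lift d (rpart q₂) (by rw [hd2])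
      have hs1 : s ≫ q₁ = d := hQ.lift_fst _ _ _
      have hs2 : s ≫ q₂ = rpart q₂ := hQ.lift_snd _ _ _
      have hls : lpart q₂ ≫ s = 𝟙 Q := by
        apply hQ.hom_ext
        · rw [Category.assoc, hs1, hd1, Category.id_comp]
        · rw [Category.assoc, hs2, hfac, Category.id_comp]
      have hsl : s ≫ lpart q₂ = 𝟙 (im q₂) := by
        obtain ⟨k, -, hk⟩ := h.orth (lpart q₂) (rpart q₂) (hl q₂) (hr q₂)
          (lpart q₂) (rpart q₂) rfl
        have e1 : s ≫ lpart q₂ = k := hk _ ⟨by rw [← Category.assoc, hls, Category.id_comp],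
          by rw [Category.assoc, hfac, hs2]⟩
        have e2 : 𝟙 (im q₂) = k := hk _ ⟨Category.comp_id _, Category.id_comp _⟩
        rw [e1, e2]
      exact h.retract_right
        (Arrow.homMk' (f := q₂) (g := rpart q₂) (u := lpart q₂) (v := 𝟙 W)
          (show lpart q₂ ≫ rpart q₂ = q₂ ≫ 𝟙 W by rw [hfac, Category.comp_id]))
        (Arrow.homMk' (f := rpart q₂) (g := q₂) (u := s) (v := 𝟙 W)
          (show s ≫ q₂ = rpart q₂ ≫ 𝟙 W by rw [hs2, Category.comp_id]))
        (by ext <;> simp [hls]) (hr q₂)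
    -- compare the two factorizations of `p₂`
    have hp₂fac : u ≫ q₂ = lpart p₂ ≫ rpart p₂ := by rw [hu2, hfac]
    obtain ⟨e, ⟨he1, he2⟩, -⟩ := h.orth (lpart p₂) q₂ (hl p₂) hRq₂ u (rpart p₂) hp₂fac
    obtain ⟨e', ⟨he'1, he'2⟩, -⟩ := h.orth u (rpart p₂) hLu (hr p₂) (lpart p₂) q₂ hp₂fac.symm
    have hee' : e ≫ e' = 𝟙 (im p₂) := by
      obtain ⟨k, -, hk⟩ := h.orth (lpart p₂) (rpart p₂) (hl p₂) (hr p₂)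
        (lpart p₂) (rpart p₂) rfl
      have e1 : e ≫ e' = k := hk _ ⟨by rw [← Category.assoc, he1, he'1],
        by rw [Category.assoc, he'2, he2]⟩
      have e2 : 𝟙 (im p₂) = k := hk _ ⟨Category.comp_id _, Category.id_comp _⟩
      rw [e1, e2]
    have he'e : e' ≫ e = 𝟙 Q := by
      obtain ⟨k, -, hk⟩ := h.orth u q₂ hLu hRq₂ u q₂ rfl
      have e1 : e' ≫ e = k := hk _ ⟨by rw [← Category.assoc, he'1, he1],
        by rw [Category.assoc, he2, he'2]⟩
      have e2 : 𝟙 Q = k := hk _ ⟨Category.comp_id _, Category.id_comp _⟩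
      rw [e1, e2]
    have : IsIso e := ⟨e', hee', he'e⟩
    refine ⟨e ≫ q₁, by rw [← Category.assoc, he1, hu1], ?_⟩
    have hsq : IsPullback e (rpart p₂) q₂ (𝟙 W) :=
      IsPullback.of_horiz_isIso ⟨by rw [he2, Category.comp_id]⟩
    have := hsq.paste_horiz hQ
    rwa [Category.id_comp] at this
  · intro hrefl P X Y Z fst snd f g hpb hg
    obtain ⟨t, ht1, ht2⟩ := hrefl snd fst g f hpb.flip
    -- `rpart g` is an isomorphism since `g ∈ L`
    obtain ⟨s, ⟨hs1, hs2⟩, -⟩ := h.orth g (rpart g) hg (hr g) (lpart g) (𝟙 Z)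
      (by rw [hfac, Category.comp_id])
    have hrs : rpart g ≫ s = 𝟙 (im g) := by
      obtain ⟨k, -, hk⟩ := h.orth (lpart g) (rpart g) (hl g) (hr g)
        (lpart g) (rpart g) rfl
      have e1 : rpart g ≫ s = k := hk _ ⟨by rw [← Category.assoc, hfac]; exact hs1,
        by rw [Category.assoc, hs2, Category.comp_id]⟩
      have e2 : 𝟙 (im g) = k := hk _ ⟨Category.comp_id _, Category.id_comp _⟩
      rw [e1, e2]
    -- hence `rpart fst` is an isomorphism, being its pullback
    let j : X ⟶ im fst := ht2.lift (f ≫ s) (𝟙 X)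
      (by rw [Category.assoc, hs2, Category.comp_id, Category.id_comp])
    have hj1 : j ≫ t = f ≫ s := ht2.lift_fst _ _ _
    have hj2 : j ≫ rpart fst = 𝟙 X := ht2.lift_snd _ _ _
    have hrj : rpart fst ≫ j = 𝟙 (im fst) := by
      apply ht2.hom_ext
      · rw [Category.assoc, hj1, Category.id_comp, ← Category.assoc, ← ht2.w,
          Category.assoc, hrs, Category.comp_id]
      · rw [Category.assoc, hj2, Category.comp_id, Category.id_comp]
    -- `fst` is a retract of `lpart fst`, hence in `L`
    exact h.retract_left
      (Arrow.homMk' (f := fst) (g := lpart fst) (u := 𝟙 P) (v := j)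
        (show (𝟙 P) ≫ lpart fst = fst ≫ j by
          rw [Category.id_comp]
          calc lpart fst = (lpart fst ≫ rpart fst) ≫ j := by
                rw [Category.assoc, hrj, Category.comp_id]
            _ = fst ≫ j := by rw [hfac]))
      (Arrow.homMk' (f := lpart fst) (g := fst) (u := 𝟙 P) (v := rpart fst)
        (show (𝟙 P) ≫ fst = lpart fst ≫ rpart fst by
          rw [Category.id_comp, hfac]))
      (by ext <;> simp [hj2]) (hl fst)
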